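/- arXiv:1701.05795 — 7 statements merged into one kernel-verified Lean document; each statement's English description precedes it below -/
import Mathlib

section
/- If λ ∈ ℂ is such that the boundary value problem -U'' = (ω² - λ²)U on (0,1), U(0) = 0, U'(1) = λU(1) has a nontrivial solution U, then either Im λ = 0, or Im λ ≠ 0 and Re λ > 0. -/
open Set intervalIntegral Complex

/-- Auxiliary Gronwall-type uniqueness: if `U'' = -c U` on `[0,1]` and
`U(1) = U'(1) = 0`, then `U ≡ 0` on `[0,1]`. -/
lemma trapped_modes_aux_unique (c : ℂ) (U : ℝ → ℂ)
    (hDU : ∀ x, HasDerivAt U (deriv U x) x)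
    (hDDU : ∀ x, HasDerivAt (deriv U) (deriv (deriv U) x) x)
    (hcontU : Continuous U) (hcontdU : Continuous (deriv U))
    (hodeIcc : ∀ x ∈ Icc (0:ℝ) 1, deriv (deriv U) x = -c * U x)
    (hU1 : U 1 = 0) (hdU1 : deriv U 1 = 0) :
    ∀ x ∈ Icc (0:ℝ) 1, U x = 0 := by
  set K : ℝ := 1 + ‖c‖ with hK
  set g : ℝ → ℝ := fun x => Complex.normSq (U x) + Complex.normSq (deriv U x) with hg
  set g' : ℝ → ℝ := fun x =>
    (deriv U x * (starRingEnd ℂ) (U x) + U x * (starRingEnd ℂ) (deriv U x)).re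
      + (deriv (deriv U) x * (starRingEnd ℂ) (deriv U x)
          + deriv U x * (starRingEnd ℂ) (deriv (deriv U) x)).re with hg'
  have hDg : ∀ x, HasDerivAt g (g' x) x := by
    intro x
    have h1 : HasDerivAt (fun y => U y * (starRingEnd ℂ) (U y))
        (deriv U x * (starRingEnd ℂ) (U x) + U x * (starRingEnd ℂ) (deriv U x)) x :=
      (hDU x).mul (hDU x).star
    have h2 : HasDerivAt (fun y => deriv U y * (starRingEnd ℂ) (deriv U y))
        (deriv (deriv U) x * (starRingEnd ℂ) (deriv U x)
          + deriv U x * (starRingEnd ℂ) (deriv (deriv U) x)) x :=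
      (hDDU x).mul (hDDU x).star
    have h1' := (Complex.reCLM.hasFDerivAt.comp_hasDerivAt x h1)
    have h2' := (Complex.reCLM.hasFDerivAt.comp_hasDerivAt x h2)
    have : HasDerivAt (fun y => (U y * (starRingEnd ℂ) (U y)).re
        + (deriv U y * (starRingEnd ℂ) (deriv U y)).re) (g' x) x := h1'.add h2'
    convert this using 2 with y
    · simp [hg, Complex.mul_conj, Complex.normSq_apply]
  set h : ℝ → ℝ := fun x => g x * Real.exp (K * x) with hh
  have hDh : ∀ x, HasDerivAt h ((g' x + K * g x) * Real.exp (K * x)) x := by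
    intro x
    have he : HasDerivAt (fun y => Real.exp (K * y)) (K * Real.exp (K * x)) x := by
      have h0 : HasDerivAt (fun y : ℝ => K * y) K x := by
        simpa using (hasDerivAt_id x).const_mul K
      have h1 := (Real.hasDerivAt_exp (K * x)).comp x h0
      rw [mul_comm] at h1
      exact h1
    have := (hDg x).mul he
    exact this.congr_deriv (by ring)
  have hbound : ∀ x ∈ Ioo (0:ℝ) 1, 0 ≤ g' x + K * g x := by
    intro x hx
    have hxI : x ∈ Icc (0:ℝ) 1 := Ioo_subset_Icc_self hx
    have hode := hodeIcc x hxI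
    set a := ‖U x‖ with ha
    set b := ‖deriv U x‖ with hb
    have ha0 : 0 ≤ a := norm_nonneg _
    have hb0 : 0 ≤ b := norm_nonneg _
    have hc0 : 0 ≤ ‖c‖ := norm_nonneg _
    have h1 : |(deriv U x * (starRingEnd ℂ) (U x) + U x * (starRingEnd ℂ) (deriv U x)).re|
        ≤ 2 * (b * a) := by
      calc |(deriv U x * (starRingEnd ℂ) (U x) + U x * (starRingEnd ℂ) (deriv U x)).re|
          ≤ ‖deriv U x * (starRingEnd ℂ) (U x) + U x * (starRingEnd ℂ) (deriv U x)‖ :=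
            Complex.abs_re_le_norm _
        _ ≤ ‖deriv U x * (starRingEnd ℂ) (U x)‖
            + ‖U x * (starRingEnd ℂ) (deriv U x)‖ := norm_add_le _ _
        _ = 2 * (b * a) := by simp [norm_mul, Complex.norm_conj]; ring
    have h2 : |(deriv (deriv U) x * (starRingEnd ℂ) (deriv U x)
          + deriv U x * (starRingEnd ℂ) (deriv (deriv U) x)).re|
        ≤ 2 * (‖c‖ * a * b) := by
      calc |(deriv (deriv U) x * (starRingEnd ℂ) (deriv U x)
            + deriv U x * (starRingEnd ℂ) (deriv (deriv U) x)).re|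
          ≤ ‖deriv (deriv U) x * (starRingEnd ℂ) (deriv U x)
            + deriv U x * (starRingEnd ℂ) (deriv (deriv U) x)‖ := Complex.abs_re_le_norm _
        _ ≤ ‖deriv (deriv U) x‖ * b + b * ‖deriv (deriv U) x‖ := by
            refine le_trans (norm_add_le _ _) ?_
            simp [norm_mul, Complex.norm_conj, hb]
        _ = 2 * (‖c‖ * a * b) := by
            rw [hode, norm_mul]
            have : ‖-c‖ = ‖c‖ := by
              simp
            rw [this]; ring
    have hga : g x = a^2 + b^2 := by
      simp [hg, ha, hb, Complex.sq_norm]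
    rw [hga]
    have e1 : -(2*(b*a)) ≤ (deriv U x * (starRingEnd ℂ) (U x)
        + U x * (starRingEnd ℂ) (deriv U x)).re := neg_le_of_abs_le h1
    have e2 : -(2*(‖c‖ * a * b)) ≤ (deriv (deriv U) x * (starRingEnd ℂ) (deriv U x)
          + deriv U x * (starRingEnd ℂ) (deriv (deriv U) x)).re := neg_le_of_abs_le h2
    have : g' x ≥ -(2*(b*a)) - 2*(‖c‖ * a * b) := by
      simp only [hg']; linarith
    nlinarith [sq_nonneg (a-b), sq_nonneg (a+b), mul_nonneg ha0 hb0,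
      mul_nonneg (mul_nonneg hc0 ha0) hb0]
  have hmono : MonotoneOn h (Icc (0:ℝ) 1) := by
    apply monotoneOn_of_deriv_nonneg (convex_Icc 0 1)
    · exact Continuous.continuousOn (by
        apply Continuous.mul
        · exact ((Complex.continuous_normSq.comp hcontU).add
            (Complex.continuous_normSq.comp hcontdU))
        · exact Real.continuous_exp.comp (continuous_const.mul continuous_id))
    · intro x _
      exact ((hDh x).differentiableAt).differentiableWithinAt
    · intro x hx
      rw [interior_Icc] at hx
      rw [(hDh x).deriv]
      exact mul_nonneg (hbound x hx) (Real.exp_nonneg _)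
  intro x hx
  have hh1 : h 1 = 0 := by simp [hh, hg, hU1, hdU1]
  have hhx : h x ≤ 0 := by
    have := hmono hx (right_mem_Icc.mpr (by norm_num)) hx.2
    simpa [hh1] using this
  have hgx : 0 ≤ g x := add_nonneg (Complex.normSq_nonneg _) (Complex.normSq_nonneg _)
  have hx0 : g x = 0 := by
    have hpos : 0 < Real.exp (K * x) := Real.exp_pos _
    by_contra hne
    have h3 : 0 < g x := lt_of_le_of_ne hgx (Ne.symm hne)
    have h4 : 0 < h x := mul_pos h3 hpos
    linarith
  have : Complex.normSq (U x) = 0 := by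
    have := Complex.normSq_nonneg (U x)
    have := Complex.normSq_nonneg (deriv U x)
    simp [hg] at hx0
    linarith [hx0]
  exact Complex.normSq_eq_zero.mp this

/-- If the boundary value problem `-U'' = (ω² - λ²)U` on `(0,1)`, `U(0) = 0`,
`U'(1) = λ U(1)` has a nontrivial solution, then either `Im λ = 0`, or
`Im λ ≠ 0` and `Re λ > 0`. -/
theorem trapped_modes_stmt0 (ω : ℝ) (lam : ℂ) (U : ℝ → ℂ)
    (hU : ContDiff ℝ 2 U)
    (hode : ∀ x ∈ Set.Ioo (0:ℝ) 1,
      -(deriv (deriv U) x) = ((ω : ℂ)^2 - lam^2) * U x)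
    (hbc0 : U 0 = 0)
    (hbc1 : deriv U 1 = lam * U 1)
    (hnontriv : ∃ x ∈ Set.Icc (0:ℝ) 1, U x ≠ 0) :
    lam.im = 0 ∨ (lam.im ≠ 0 ∧ 0 < lam.re) := by
  by_cases him : lam.im = 0
  · exact Or.inl him
  refine Or.inr ⟨him, ?_⟩
  by_contra hre
  push_neg at hre
  -- regularity
  have h2 : ContDiff ℝ ((1:ℕ)+1) U := by exact_mod_cast hU
  have hU1 : Differentiable ℝ U := (contDiff_succ_iff_deriv.mp h2).1
  have hdUc1 : ContDiff ℝ 1 (deriv U) := (contDiff_succ_iff_deriv.mp h2).2.2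
  have hdU1 : Differentiable ℝ (deriv U) := (contDiff_one_iff_deriv.mp hdUc1).1
  have hcontU : Continuous U := hU1.continuous
  have hcontdU : Continuous (deriv U) := hdU1.continuous
  have hcontddU : Continuous (deriv (deriv U)) := (contDiff_one_iff_deriv.mp hdUc1).2
  have hDU : ∀ x, HasDerivAt U (deriv U x) x := fun x => (hU1 x).hasDerivAt
  have hDDU : ∀ x, HasDerivAt (deriv U) (deriv (deriv U) x) x := fun x => (hdU1 x).hasDerivAt
  -- ODE on the closed interval
  have hodeIcc : ∀ x ∈ Icc (0:ℝ) 1,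
      deriv (deriv U) x = -((ω : ℂ)^2 - lam^2) * U x := by
    have heq : Set.EqOn (deriv (deriv U)) (fun x => -((ω : ℂ)^2 - lam^2) * U x) (Ioo 0 1) := by
      intro x hx
      have h := hode x hx
      simpa using (neg_eq_iff_eq_neg.mp h).trans (by ring)
    have hcl := heq.closure hcontddU (by continuity)
    rw [closure_Ioo (by norm_num : (0:ℝ) ≠ 1)] at hcl
    exact hcl
  -- integration by parts identity
  set F' : ℝ → ℂ := fun x =>
    deriv (deriv U) x * (starRingEnd ℂ) (U x) + deriv U x * (starRingEnd ℂ) (deriv U x)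
    with hF'
  have hF : ∀ x, HasDerivAt (fun y => deriv U y * (starRingEnd ℂ) (U y)) (F' x) x := by
    intro x
    exact (hDDU x).mul (hDU x).star
  have hcF' : Continuous F' := by
    apply Continuous.add
    · exact hcontddU.mul (continuous_star.comp hcontU)
    · exact hcontdU.mul (continuous_star.comp hcontdU)
  have hIBP : ∫ x in (0:ℝ)..1, F' x
      = deriv U 1 * (starRingEnd ℂ) (U 1) - deriv U 0 * (starRingEnd ℂ) (U 0) :=
    integral_eq_sub_of_hasDerivAt (fun x _ => hF x) (hcF'.intervalIntegrable 0 1)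
  have huIcc : uIcc (0:ℝ) 1 = Icc (0:ℝ) 1 := uIcc_of_le (by norm_num)
  have hsplit : ∫ x in (0:ℝ)..1, F' x
      = (∫ x in (0:ℝ)..1, deriv (deriv U) x * (starRingEnd ℂ) (U x))
        + ∫ x in (0:ℝ)..1, deriv U x * (starRingEnd ℂ) (deriv U x) :=
    integral_add ((hcontddU.mul (continuous_star.comp hcontU)).intervalIntegrable 0 1)
      ((hcontdU.mul (continuous_star.comp hcontdU)).intervalIntegrable 0 1)
  have hE1 : (∫ x in (0:ℝ)..1, deriv (deriv U) x * (starRingEnd ℂ) (U x))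
      = -((ω : ℂ)^2 - lam^2) * ((∫ x in (0:ℝ)..1, Complex.normSq (U x) : ℝ) : ℂ) := by
    have : ∫ x in (0:ℝ)..1, deriv (deriv U) x * (starRingEnd ℂ) (U x)
        = ∫ x in (0:ℝ)..1, -((ω : ℂ)^2 - lam^2) * ((Complex.normSq (U x) : ℝ) : ℂ) := by
      apply integral_congr
      intro x hx
      rw [huIcc] at hx
      show deriv (deriv U) x * (starRingEnd ℂ) (U x) = _
      rw [hodeIcc x hx, mul_assoc, Complex.mul_conj]
    rw [this, integral_const_mul, intervalIntegral.integral_ofReal]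
  have hE2 : (∫ x in (0:ℝ)..1, deriv U x * (starRingEnd ℂ) (deriv U x))
      = ((∫ x in (0:ℝ)..1, Complex.normSq (deriv U x) : ℝ) : ℂ) := by
    have : ∫ x in (0:ℝ)..1, deriv U x * (starRingEnd ℂ) (deriv U x)
        = ∫ x in (0:ℝ)..1, ((Complex.normSq (deriv U x) : ℝ) : ℂ) := by
      apply integral_congr; intro x _
      show deriv U x * (starRingEnd ℂ) (deriv U x) = _
      rw [Complex.mul_conj]
    rw [this, intervalIntegral.integral_ofReal]
  rw [hsplit, hE1, hE2, hbc0, hbc1, map_zero, mul_zero, sub_zero, mul_assoc,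
    Complex.mul_conj] at hIBP
  -- extract the imaginary part
  set A : ℝ := ∫ x in (0:ℝ)..1, Complex.normSq (U x) with hA
  set n1 : ℝ := Complex.normSq (U 1) with hn1
  have hkey : n1 = 2 * lam.re * A := by
    have h := congrArg Complex.im hIBP
    simp only [Complex.add_im, Complex.mul_im, Complex.neg_im, Complex.neg_re, Complex.sub_im,
      Complex.sub_re, Complex.ofReal_im, Complex.ofReal_re, sq, Complex.mul_re,
      Complex.ofReal_mul] at h
    have h0 : lam.im * (2 * lam.re * A - n1) = 0 := by ring_nf; ring_nf at h; linarith
    rcases mul_eq_zero.mp h0 with h'|h'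
    · exact absurd h' him
    · linarith
  -- nonnegativity forces U(1) = 0
  have hA0 : 0 ≤ A := intervalIntegral.integral_nonneg (by norm_num)
    (fun u _ => Complex.normSq_nonneg _)
  have hn10 : 0 ≤ n1 := Complex.normSq_nonneg _
  have hUend : U 1 = 0 := by
    have : n1 ≤ 0 := by
      rw [hkey]
      have : 2 * lam.re * A ≤ 0 :=
        mul_nonpos_of_nonpos_of_nonneg (by linarith) hA0
      linarith
    exact Complex.normSq_eq_zero.mp (le_antisymm this hn10)
  have hdUend : deriv U 1 = 0 := by rw [hbc1, hUend, mul_zero]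
  -- uniqueness forces U ≡ 0, contradicting nontriviality
  obtain ⟨x, hx, hxne⟩ := hnontriv
  exact hxne (trapped_modes_aux_unique ((ω : ℂ)^2 - lam^2) U hDU hDDU hcontU hcontdU
    hodeIcc hUend hdUend x hx)
end

section
/- For ω = 0, the only solution (u,v) of the system (-i∂ₓ + ∂_y)v = 0, (-i∂ₓ - ∂_y)u = 0 on the strip Π = (0,1) × ℝ with boundary conditions u(0,y) = 0 and v(1,y) = 0, where u and v are continuously differentiable and bounded, is the trivial solution u = 0, v = 0. -/
open Complex Set

section helpers
lemma lemA {F : ℂ → ℂ} {L : ℂ →L[ℝ] ℂ} {z : ℂ} (h : HasFDerivAt F L z)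
    (hCR : L Complex.I = Complex.I * L 1) : HasDerivAt F (L 1) z := by
  have key : ∀ w : ℂ, L w = w * L 1 := by
    intro w
    have hw : w = w.re • (1:ℂ) + w.im • Complex.I := by
      simp [Complex.real_smul, Complex.re_add_im]
    rw [hw, map_add, map_smul, map_smul, hCR]
    simp only [Complex.real_smul, smul_eq_mul]
    ring
  rw [hasDerivAt_iff_isLittleO]
  refine h.isLittleO.congr (fun x' => ?_) (fun _ => rfl)
  rw [key, smul_eq_mul]

lemma lemB {F : ℂ → ℂ} {c z : ℂ} (h : HasDerivAt F c (2 - (starRingEnd ℂ) z)) :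
    DifferentiableAt ℂ (fun w => (starRingEnd ℂ) (F (2 - (starRingEnd ℂ) w))) z := by
  have hconj : ∀ x : ℂ, HasFDerivAt (fun w : ℂ => (starRingEnd ℂ) w)
      (Complex.conjCLE.toContinuousLinearMap : ℂ →L[ℝ] ℂ) x := by
    intro x
    exact Complex.conjCLE.toContinuousLinearMap.hasFDerivAt (x := x)
  have hσ : HasFDerivAt (fun w : ℂ => 2 - (starRingEnd ℂ) w)
      (-(Complex.conjCLE.toContinuousLinearMap : ℂ →L[ℝ] ℂ)) z := by
    have h2 := (hasFDerivAt_const (2:ℂ) z).sub (hconj z)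
    rw [zero_sub] at h2
    exact h2
  have hF : HasFDerivAt F (((1 : ℂ →L[ℂ] ℂ).smulRight c).restrictScalars ℝ)
      (2 - (starRingEnd ℂ) z) := h.hasFDerivAt.restrictScalars ℝ
  have hcomp := (hconj (F (2 - (starRingEnd ℂ) z))).comp z (hF.comp z hσ)
  set M := (Complex.conjCLE.toContinuousLinearMap : ℂ →L[ℝ] ℂ).comp
      ((((1 : ℂ →L[ℂ] ℂ).smulRight c).restrictScalars ℝ).comp
        (-(Complex.conjCLE.toContinuousLinearMap : ℂ →L[ℝ] ℂ))) with hM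
  have hCR : M Complex.I = Complex.I * M 1 := by
    simp [hM, Complex.ext_iff]
  exact ⟨_, lemA hcomp hCR⟩
end helpers

lemma strip_zero (f : ℝ → ℝ → ℂ)
    (hf : ContDiff ℝ 1 (fun p : ℝ × ℝ => f p.1 p.2))
    (heq : ∀ x ∈ Set.Ioo (0:ℝ) 1, ∀ y : ℝ,
      deriv (fun s => f x s) y = Complex.I * deriv (fun t => f t y) x)
    (hbc : ∀ y : ℝ, f 1 y = 0) :
    ∀ x ∈ Set.Icc (0:ℝ) 1, ∀ y : ℝ, f x y = 0 := by
  set g : ℝ × ℝ → ℂ := fun p => f p.1 p.2 with hg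
  have hgd : Differentiable ℝ g := hf.differentiable one_ne_zero
  -- partial derivatives
  have hx : ∀ x y : ℝ, HasDerivAt (fun t => f t y) (fderiv ℝ g (x, y) (1, 0)) x := by
    intro x y
    exact (hgd (x, y)).hasFDerivAt.comp_hasDerivAt x
      ((hasDerivAt_id x).prodMk (hasDerivAt_const x y))
  have hy : ∀ x y : ℝ, HasDerivAt (fun s => f x s) (fderiv ℝ g (x, y) (0, 1)) y := by
    intro x y
    exact (hgd (x, y)).hasFDerivAt.comp_hasDerivAt y
      ((hasDerivAt_const y x).prodMk (hasDerivAt_id y))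
  -- CR relation on the closed strip
  have hCRcl : ∀ p : ℝ × ℝ, p.1 ∈ Set.Icc (0:ℝ) 1 →
      fderiv ℝ g p (0, 1) = Complex.I * fderiv ℝ g p (1, 0) := by
    have hcont : Continuous fun p : ℝ × ℝ =>
        fderiv ℝ g p (0, 1) - Complex.I * fderiv ℝ g p (1, 0) := by
      have h1 : Continuous fun p : ℝ × ℝ => fderiv ℝ g p :=
        hf.continuous_fderiv one_ne_zero
      exact (h1.clm_apply continuous_const).sub
        (continuous_const.mul (h1.clm_apply continuous_const))
    have hzero : Set.EqOn (fun p : ℝ × ℝ =>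
        fderiv ℝ g p (0, 1) - Complex.I * fderiv ℝ g p (1, 0)) 0
        (Set.Ioo (0:ℝ) 1 ×ˢ (Set.univ : Set ℝ)) := by
      rintro ⟨x, y⟩ ⟨hx1, -⟩
      have e1 := (hy x y).deriv
      have e2 := (hx x y).deriv
      have := heq x hx1 y
      simp only [e1, e2] at this
      simpa [sub_eq_zero] using this
    have hcl := hzero.closure hcont continuous_const
    intro p hp
    have hpcl : p ∈ closure (Set.Ioo (0:ℝ) 1 ×ˢ (Set.univ : Set ℝ)) := by
      rw [closure_prod_eq, closure_Ioo one_ne_zero.symm]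
      exact ⟨hp, by simp⟩
    have := hcl hpcl
    simpa [sub_eq_zero] using this
  -- the full derivative vanishes on the line x = 1
  have hline : ∀ y : ℝ, fderiv ℝ g (1, y) = 0 := by
    intro y
    have hy0 : fderiv ℝ g (1, y) (0, 1) = 0 := by
      have h1 : HasDerivAt (fun s => f 1 s) (fderiv ℝ g (1, y) (0, 1)) y := hy 1 y
      have h2 : (fun s : ℝ => f 1 s) = fun _ => (0:ℂ) := funext hbc
      rw [h2] at h1
      simpa using h1.unique (hasDerivAt_const y (0:ℂ))
    have hx0 : fderiv ℝ g (1, y) (1, 0) = 0 := by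
      have := hCRcl (1, y) (by norm_num)
      rw [hy0] at this
      field_simp at this
      exact (mul_eq_zero.mp this.symm).resolve_left Complex.I_ne_zero
    ext
    · simpa using hx0
    · simpa using hy0
  -- holomorphy of F on the open strip
  set F : ℂ → ℂ := fun z => f z.re z.im with hFdef
  have hFd : ∀ z : ℂ, z.re ∈ Set.Ioo (0:ℝ) 1 →
      HasDerivAt F (fderiv ℝ g (z.re, z.im) (1, 0)) z := by
    intro z hz
    have hE : HasFDerivAt (fun w : ℂ => ((w.re, w.im) : ℝ × ℝ))
        (Complex.equivRealProdCLM.toContinuousLinearMap : ℂ →L[ℝ] ℝ × ℝ) z := by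
      exact Complex.equivRealProdCLM.toContinuousLinearMap.hasFDerivAt (x := z)
    have hcomp : HasFDerivAt F
        ((fderiv ℝ g (z.re, z.im)).comp
          (Complex.equivRealProdCLM.toContinuousLinearMap : ℂ →L[ℝ] ℝ × ℝ)) z :=
      by have h := (hgd (z.re, z.im)).hasFDerivAt.comp z hE; exact h
    have h1 : ((fderiv ℝ g (z.re, z.im)).comp
        (Complex.equivRealProdCLM.toContinuousLinearMap : ℂ →L[ℝ] ℝ × ℝ)) 1
        = fderiv ℝ g (z.re, z.im) (1, 0) := by simp
    have hCR : ((fderiv ℝ g (z.re, z.im)).comp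
          (Complex.equivRealProdCLM.toContinuousLinearMap : ℂ →L[ℝ] ℝ × ℝ)) Complex.I
        = Complex.I * ((fderiv ℝ g (z.re, z.im)).comp
          (Complex.equivRealProdCLM.toContinuousLinearMap : ℂ →L[ℝ] ℝ × ℝ)) 1 := by
      simp only [ContinuousLinearMap.comp_apply]
      have : (Complex.equivRealProdCLM.toContinuousLinearMap : ℂ →L[ℝ] ℝ × ℝ) Complex.I
          = ((0:ℝ), (1:ℝ)) := by simp
      rw [this]
      have : (Complex.equivRealProdCLM.toContinuousLinearMap : ℂ →L[ℝ] ℝ × ℝ) 1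
          = ((1:ℝ), (0:ℝ)) := by simp
      rw [this]
      exact hCRcl (z.re, z.im) ⟨hz.1.le, hz.2.le⟩
    have := lemA hcomp hCR
    rwa [h1] at this
  -- key estimate near the line x = 1
  have est : ∀ y₀ : ℝ, ∀ ε > (0:ℝ), ∃ δ > (0:ℝ), ∀ z : ℂ, z.re ≤ 1 →
      dist z (1 + y₀ * Complex.I) < δ → ‖F z‖ ≤ ε * dist z (1 + y₀ * Complex.I) := by
    intro y₀ ε hε
    have hcont : ContinuousAt (fun q : ℝ × ℝ => ‖fderiv ℝ g q‖) (1, y₀) :=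
      ((hf.continuous_fderiv one_ne_zero).norm).continuousAt
    have h0 : ‖fderiv ℝ g ((1:ℝ), y₀)‖ = 0 := by rw [hline y₀]; simp
    obtain ⟨δ, hδ, hball⟩ := Metric.continuousAt_iff.mp hcont ε hε
    refine ⟨δ, hδ, ?_⟩
    intro z hz1 hzd
    have hre : (1 + (y₀:ℂ) * Complex.I).re = 1 := by simp
    have him : (1 + (y₀:ℂ) * Complex.I).im = y₀ := by simp
    have habs_re : |z.re - 1| ≤ dist z (1 + y₀ * Complex.I) := by
      rw [Complex.dist_eq]
      calc |z.re - 1| = |(z - (1 + y₀ * Complex.I)).re| := by simp [Complex.sub_re, hre]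
        _ ≤ ‖z - (1 + y₀ * Complex.I)‖ := Complex.abs_re_le_norm _
    have habs_im : |z.im - y₀| ≤ dist z (1 + y₀ * Complex.I) := by
      rw [Complex.dist_eq]
      calc |z.im - y₀| = |(z - (1 + y₀ * Complex.I)).im| := by simp [Complex.sub_im, him]
        _ ≤ ‖z - (1 + y₀ * Complex.I)‖ := Complex.abs_im_le_norm _
    have hmem1 : ((z.re, z.im) : ℝ × ℝ) ∈ Metric.ball ((1:ℝ), y₀) δ := by
      rw [Metric.mem_ball, Prod.dist_eq]
      exact max_lt (lt_of_le_of_lt (by simpa [Real.dist_eq] using habs_re) hzd)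
        (lt_of_le_of_lt (by simpa [Real.dist_eq] using habs_im) hzd)
    have hmem2 : (((1:ℝ), z.im) : ℝ × ℝ) ∈ Metric.ball ((1:ℝ), y₀) δ := by
      rw [Metric.mem_ball, Prod.dist_eq]
      refine max_lt (by simpa using hδ) ?_
      exact lt_of_le_of_lt (by simpa [Real.dist_eq] using habs_im) hzd
    have hbound : ∀ q ∈ Metric.ball ((1:ℝ), y₀) δ, ‖fderiv ℝ g q‖ ≤ ε := by
      intro q hq
      have := hball (Metric.mem_ball.mp hq)
      rw [Real.dist_eq, h0, sub_zero] at this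
      exact le_of_lt (lt_of_le_of_lt (le_abs_self _) this)
    have hmvt := (convex_ball ((1:ℝ), y₀) δ).norm_image_sub_le_of_norm_fderiv_le
      (fun q _ => hgd q) hbound hmem2 hmem1
    have hq0 : g ((1:ℝ), z.im) = 0 := hbc z.im
    have hnorm : ‖((z.re, z.im) : ℝ × ℝ) - ((1:ℝ), z.im)‖ ≤ dist z (1 + y₀ * Complex.I) := by
      have : ((z.re, z.im) : ℝ × ℝ) - ((1:ℝ), z.im) = (z.re - 1, 0) := by simp
      rw [this, Prod.norm_def]
      simp only [norm_zero]
      rw [max_eq_left (norm_nonneg _)]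
      simpa [Real.norm_eq_abs] using habs_re
    calc ‖F z‖ = ‖g (z.re, z.im) - g ((1:ℝ), z.im)‖ := by rw [hq0, sub_zero]
      _ ≤ ε * ‖((z.re, z.im) : ℝ × ℝ) - ((1:ℝ), z.im)‖ := hmvt
      _ ≤ ε * dist z (1 + y₀ * Complex.I) := by
          exact mul_le_mul_of_nonneg_left hnorm hε.le
  -- the reflected extension
  set E : ℂ → ℂ := fun z =>
    if z.re ≤ 1 then F z else (starRingEnd ℂ) (F (2 - (starRingEnd ℂ) z)) with hEdef
  have hE0 : ∀ z : ℂ, z.re = 1 → HasDerivAt E 0 z := by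
    intro z hz
    have hzeq : z = 1 + (z.im : ℂ) * Complex.I := by
      apply Complex.ext <;> simp [hz]
    have hFz : F z = 0 := by
      have : F z = f z.re z.im := rfl
      rw [this, hz]; exact hbc z.im
    have hEz : E z = 0 := by rw [hEdef]; simp only [hz, le_refl, if_pos]; exact hFz
    have h0 : (0:ℂ) = ((0 : ℂ →L[ℝ] ℂ)) 1 := by simp
    rw [h0]
    apply lemA (L := 0) _ (by simp)
    refine HasFDerivAt.of_isLittleO ?_
    rw [Asymptotics.isLittleO_iff]
    intro c hc
    obtain ⟨δ, hδ, hest⟩ := est z.im c hc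
    rw [Filter.eventually_iff_exists_mem]
    refine ⟨Metric.ball z δ, Metric.ball_mem_nhds z hδ, ?_⟩
    intro z' hz'
    rw [hEz, sub_zero]
    have hdist : dist z' (1 + z.im * Complex.I) < δ := by
      rwa [← hzeq, ← Metric.mem_ball]
    simp only [ContinuousLinearMap.zero_apply, sub_zero]
    by_cases hle : z'.re ≤ 1
    · have hEz' : E z' = F z' := by rw [hEdef]; simp [hle]
      rw [hEz']
      calc ‖F z'‖ ≤ c * dist z' (1 + z.im * Complex.I) := hest z' hle hdist
        _ = c * ‖z' - z‖ := by rw [← hzeq, dist_eq_norm]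
    · have hEz' : E z' = (starRingEnd ℂ) (F (2 - (starRingEnd ℂ) z')) := by
        rw [hEdef]; simp [hle]
      rw [hEz']
      set w := 2 - (starRingEnd ℂ) z' with hw
      have hwre : w.re ≤ 1 := by
        simp only [hw, Complex.sub_re, Complex.conj_re]
        push_neg at hle
        norm_num
        linarith
      have hwz : w - z = (starRingEnd ℂ) (z - z') := by
        rw [hw, hzeq]
        apply Complex.ext <;> simp <;> ring
      have hdwz : dist w z = dist z' z := by
        rw [dist_eq_norm, dist_eq_norm, hwz, RCLike.norm_conj]
        exact norm_sub_rev z z'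
      have hwd : dist w (1 + z.im * Complex.I) < δ := by
        rw [← hzeq] at hdist ⊢
        rw [hdwz]; exact hdist
      calc ‖(starRingEnd ℂ) (F w)‖ = ‖F w‖ := RCLike.norm_conj _
        _ ≤ c * dist w (1 + z.im * Complex.I) := hest w hwre hwd
        _ = c * ‖z' - z‖ := by rw [← hzeq, hdwz, dist_eq_norm]
  -- E is holomorphic on the strip (0,2)
  set T : Set ℂ := Complex.re ⁻¹' Set.Ioo 0 2 with hT
  have hTopen : IsOpen T := isOpen_Ioo.preimage Complex.continuous_re
  have hEdiff : DifferentiableOn ℂ E T := by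
    intro z hz
    have hz' : z.re ∈ Set.Ioo (0:ℝ) 2 := hz
    rcases lt_trichotomy z.re 1 with hlt | heq1 | hgt
    · have hopen : IsOpen {w : ℂ | w.re < 1} := isOpen_lt Complex.continuous_re continuous_const
      have hev : E =ᶠ[nhds z] F := by
        filter_upwards [hopen.mem_nhds hlt] with w hw
        rw [hEdef]; simp [le_of_lt hw]
      exact ((hFd z ⟨hz'.1, hlt⟩).differentiableAt.congr_of_eventuallyEq
        hev).differentiableWithinAt
    · exact (hE0 z heq1).differentiableAt.differentiableWithinAt
    · have hopen : IsOpen {w : ℂ | 1 < w.re} := isOpen_lt continuous_const Complex.continuous_re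
      have hev : E =ᶠ[nhds z] fun w => (starRingEnd ℂ) (F (2 - (starRingEnd ℂ) w)) := by
        filter_upwards [hopen.mem_nhds hgt] with w hw
        rw [hEdef]; simp [not_le.mpr hw]
      have hwre : (2 - (starRingEnd ℂ) z).re ∈ Set.Ioo (0:ℝ) 1 := by
        have h2re : (2:ℂ).re = 2 := by norm_num
        rw [Set.mem_Ioo, Complex.sub_re, Complex.conj_re, h2re]
        constructor <;> linarith [hz'.2]
      exact ((lemB (hFd _ hwre)).congr_of_eventuallyEq hev).differentiableWithinAt
  -- identity theorem
  have hpre : IsPreconnected T := by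
    have : Convex ℝ T :=
      (convex_Ioo (0:ℝ) 2).linear_preimage (Complex.reCLM : ℂ →L[ℝ] ℝ).toLinearMap
    exact this.isPreconnected
  have hone : (1:ℂ) ∈ T := by simp [hT]
  have hfreq : ∃ᶠ w in nhdsWithin (1:ℂ) {(1:ℂ)}ᶜ, E w = 0 := by
    have hseq : Filter.Tendsto (fun n : ℕ => (1:ℂ) + (((n:ℝ)+1)⁻¹ : ℝ) * Complex.I)
        Filter.atTop (nhdsWithin (1:ℂ) {(1:ℂ)}ᶜ) := by
      rw [tendsto_nhdsWithin_iff]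
      constructor
      · have h1 : Filter.Tendsto (fun n : ℕ => ((n:ℝ)+1)⁻¹) Filter.atTop (nhds 0) :=
          tendsto_one_div_add_atTop_nhds_zero_nat.congr (by intro n; rw [one_div])
        have h2 := ((Complex.continuous_ofReal.tendsto 0).comp h1)
        have h3 := h2.mul_const Complex.I
        have h4 := (tendsto_const_nhds (x := (1:ℂ)) (f := Filter.atTop (α := ℕ))).add h3
        simpa using h4
      · refine Filter.Eventually.of_forall fun n => ?_
        simp only [Set.mem_compl_iff, Set.mem_singleton_iff]
        intro hcon
        have hpos : (0:ℝ) < ((n:ℝ)+1)⁻¹ := by positivity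
        have him := congrArg Complex.im hcon
        simp only [Complex.add_im, Complex.one_im, Complex.mul_im, Complex.ofReal_re,
          Complex.I_im, Complex.ofReal_im, Complex.I_re] at him
        simp at him
        have hn : (0:ℝ) ≤ (n:ℝ) := Nat.cast_nonneg n
        linarith
    refine hseq.frequently (Filter.Frequently.of_forall fun n => ?_)
    have hre : ((1:ℂ) + ((((n:ℝ)+1)⁻¹ : ℝ) : ℂ) * Complex.I).re = 1 := by simp
    simp only [hEdef]
    rw [if_pos (le_of_eq hre)]
    show f _ _ = 0
    rw [hre]
    exact hbc _
  have hEzero : Set.EqOn E 0 T :=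
    (hEdiff.analyticOnNhd hTopen).eqOn_zero_of_preconnected_of_frequently_eq_zero
      hpre hone hfreq
  -- conclusion
  have h1 : ∀ x ∈ Set.Ioc (0:ℝ) 1, ∀ y : ℝ, f x y = 0 := by
    intro x hx y
    have hmemre : ((x:ℂ) + (y:ℂ) * Complex.I).re = x := by simp
    have hmemim : ((x:ℂ) + (y:ℂ) * Complex.I).im = y := by simp
    have hmem : ((x:ℂ) + (y:ℂ) * Complex.I) ∈ T := by
      simp only [hT, Set.mem_preimage, hmemre, Set.mem_Ioo]
      exact ⟨hx.1, by linarith [hx.2]⟩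
    have h2 := hEzero hmem
    simp only [hEdef, Pi.zero_apply] at h2
    rw [if_pos (by rw [hmemre]; exact hx.2)] at h2
    have h3 : f x y = F ((x:ℂ) + (y:ℂ) * Complex.I) := by
      show f x y = f _ _
      rw [hmemre, hmemim]
    rw [h3, h2]
  intro x hx y
  have hcont : Continuous fun t : ℝ => f t y :=
    hf.continuous.comp (continuous_id.prodMk continuous_const)
  have heqc : Set.EqOn (fun t : ℝ => f t y) 0 (closure (Set.Ioc (0:ℝ) 1)) :=
    Set.EqOn.closure (fun t ht => h1 t ht y) hcont continuous_const
  rw [closure_Ioc one_ne_zero.symm] at heqc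
  exact heqc hx

/-- For `ω = 0`, the only bounded `C¹` solution `(u,v)` of
`(-i∂ₓ + ∂_y)v = 0`, `(-i∂ₓ - ∂_y)u = 0` on the strip `Π = (0,1) × ℝ` with
`u(0,y) = 0`, `v(1,y) = 0` is the trivial one. -/
theorem trapped_modes_stmt1 (u v : ℝ → ℝ → ℂ)
    (hu : ContDiff ℝ 1 (fun p : ℝ × ℝ => u p.1 p.2))
    (hv : ContDiff ℝ 1 (fun p : ℝ × ℝ => v p.1 p.2))
    (hbound : ∃ M : ℝ, ∀ x ∈ Set.Icc (0:ℝ) 1, ∀ y : ℝ,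
      ‖u x y‖ ≤ M ∧ ‖v x y‖ ≤ M)
    (heqv : ∀ x ∈ Set.Ioo (0:ℝ) 1, ∀ y : ℝ,
      -Complex.I * deriv (fun t => v t y) x + deriv (fun s => v x s) y = 0)
    (hequ : ∀ x ∈ Set.Ioo (0:ℝ) 1, ∀ y : ℝ,
      -Complex.I * deriv (fun t => u t y) x - deriv (fun s => u x s) y = 0)
    (hbcu : ∀ y : ℝ, u 0 y = 0)
    (hbcv : ∀ y : ℝ, v 1 y = 0) :
    ∀ x ∈ Set.Icc (0:ℝ) 1, ∀ y : ℝ, u x y = 0 ∧ v x y = 0 := by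
  have hvz : ∀ x ∈ Set.Icc (0:ℝ) 1, ∀ y : ℝ, v x y = 0 := by
    refine strip_zero v hv (fun x hx y => ?_) hbcv
    have h := heqv x hx y
    linear_combination h
  have huz : ∀ x ∈ Set.Icc (0:ℝ) 1, ∀ y : ℝ, u x y = 0 := by
    set g : ℝ → ℝ → ℂ := fun x y => u (1 - x) y with hgdef
    have hgC : ContDiff ℝ 1 (fun p : ℝ × ℝ => g p.1 p.2) :=
      hu.comp ((contDiff_const.sub contDiff_fst).prodMk contDiff_snd)
    have hkey : ∀ x ∈ Set.Icc (0:ℝ) 1, ∀ y : ℝ, g x y = 0 := by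
      refine strip_zero g hgC (fun x hx y => ?_) (fun y => by simp [hgdef, hbcu y])
      have hx' : (1 - x) ∈ Set.Ioo (0:ℝ) 1 := ⟨by linarith [hx.2], by linarith [hx.1]⟩
      have hda : HasDerivAt (fun t => u t y)
          (fderiv ℝ (fun p : ℝ × ℝ => u p.1 p.2) (1 - x, y) (1, 0)) (1 - x) :=
        by
          have hp := (hasDerivAt_id (1 - x)).prodMk (hasDerivAt_const (1 - x) y)
          exact HasFDerivAt.comp_hasDerivAt (1 - x) ((hu.differentiable one_ne_zero) _).hasFDerivAt hp
      set D := fderiv ℝ (fun p : ℝ × ℝ => u p.1 p.2) (1 - x, y) (1, 0) with hD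
      have hinner : HasDerivAt (fun t : ℝ => 1 - t) (-1) x := by
        simpa using (hasDerivAt_id x).const_sub 1
      have hcomp := HasDerivAt.scomp (x := x) (h := fun t : ℝ => 1 - t) hda hinner
      have hgx : deriv (fun t => g t y) x = -D := by
        have := hcomp.deriv
        simpa [hgdef, Function.comp_def] using this
      have hgy : deriv (fun s => g x s) y = -Complex.I * D := by
        have h := hequ (1 - x) hx' y
        have hDu : deriv (fun t => u t y) (1 - x) = D := hda.deriv
        rw [hDu] at h
        have : deriv (fun s => u (1 - x) s) y = -Complex.I * D := by linear_combination -h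
        simpa [hgdef] using this
      rw [hgx, hgy]
      ring
    intro x hx y
    have := hkey (1 - x) ⟨by linarith [hx.2], by linarith [hx.1]⟩ y
    simpa [hgdef] using this
  exact fun x hx y => ⟨huz x hx y, hvz x hx y⟩
end

section
/- Let ω > 1 and F(λ) = cos κ − λ sin(κ)/κ with κ² = ω² − λ². If λ₀ is a root of F with F'(λ₀) = 0, then λ₀ = 1 and ω satisfies (ω² − 1)/ω² = sin²(√(ω² − 1)). Consequently, all roots of F are simple unless ω is a threshold energy, in which case λ = 1 is the unique multiple root. -/
open Complex

private lemma sq_cpow_half (x : ℂ) : (x ^ ((1 : ℂ)/2)) ^ 2 = x := by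
  have h := Complex.cpow_nat_inv_pow x (two_ne_zero)
  norm_num at h
  simpa [one_div] using h

private lemma alg (s c w l W : ℂ) (hw : w ≠ 0) (hr : c * w = l * s) (hw2 : w^2 = W^2 - l^2)
    (hE : -s * (-l * w⁻¹) - (1 * (s / w) + l * ((c * (-l * w⁻¹) * w - s * (-l * w⁻¹)) / w ^ 2)) = 0) :
    s * (l - 1) * W^2 = 0 := by
  field_simp at hE
  have h3 : s * (l - 1) * W^2 * w^3 = 0 := by
    linear_combination w^3*hE - l^2*w^3*hr - s*(l-1)*w^3*hw2
  rcases mul_eq_zero.mp h3 with h | h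
  · exact h
  · exact absurd h (pow_ne_zero 3 hw)

/-- For `ω > 1`, if `λ₀` is a root of the dispersion function
`F(λ) = cos κ - λ sin(κ)/κ`, `κ² = ω² - λ²`, with `F'(λ₀) = 0`, then `λ₀ = 1`
and `ω` is a threshold energy: `(ω² - 1)/ω² = sin²(√(ω² - 1))`. -/
theorem trapped_modes_stmt7 (ω : ℝ) (hω : 1 < ω) (lam₀ : ℂ)
    (hroot :
      (fun lam : ℂ =>
        Complex.cos (((ω : ℂ)^2 - lam^2) ^ ((1 : ℂ)/2)) -
          lam * (if (ω : ℂ)^2 - lam^2 = 0 then 1 else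
            Complex.sin (((ω : ℂ)^2 - lam^2) ^ ((1 : ℂ)/2)) /
              (((ω : ℂ)^2 - lam^2) ^ ((1 : ℂ)/2)))) lam₀ = 0)
    (hcrit :
      deriv (fun lam : ℂ =>
        Complex.cos (((ω : ℂ)^2 - lam^2) ^ ((1 : ℂ)/2)) -
          lam * (if (ω : ℂ)^2 - lam^2 = 0 then 1 else
            Complex.sin (((ω : ℂ)^2 - lam^2) ^ ((1 : ℂ)/2)) /
              (((ω : ℂ)^2 - lam^2) ^ ((1 : ℂ)/2)))) lam₀ = 0) :
    lam₀ = 1 ∧ (ω^2 - 1) / ω^2 = (Real.sin (Real.sqrt (ω^2 - 1)))^2 := by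
  have hω0 : (0:ℝ) < ω := lt_trans one_pos hω
  simp only at hroot
  set u₀ : ℂ := (ω : ℂ)^2 - lam₀^2 with hu₀
  set w₀ : ℂ := u₀ ^ ((1:ℂ)/2) with hw₀def
  have hw2 : w₀ ^ 2 = u₀ := sq_cpow_half u₀
  -- u₀ ≠ 0
  have h0 : u₀ ≠ 0 := by
    intro h
    rw [if_pos h] at hroot
    rw [hw₀def, h, Complex.zero_cpow (by norm_num : (1:ℂ)/2 ≠ 0), Complex.cos_zero, mul_one] at hroot
    have hlam : lam₀ = 1 := by linear_combination -hroot
    rw [hu₀, hlam] at h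
    have : ((ω^2 - 1 : ℝ) : ℂ) = 0 := by push_cast; linear_combination h
    have : ω^2 - 1 = 0 := by exact_mod_cast this
    nlinarith
  rw [if_neg h0] at hroot
  have hw0 : w₀ ≠ 0 := by
    intro h
    apply h0; rw [← hw2, h]; ring
  -- rule out u₀ on the negative real axis
  have hslit : u₀ ∈ Complex.slitPlane := by
    by_contra hns
    rw [Complex.mem_slitPlane_iff] at hns
    push_neg at hns
    obtain ⟨hre, him⟩ := hns
    have hrelt : u₀.re < 0 := by
      rcases lt_or_eq_of_le hre with h | h
      · exact h
      · exact absurd (by apply Complex.ext <;> simp [h, him] : u₀ = 0) h0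
    set t : ℝ := Real.sqrt (-u₀.re) with htdef
    have ht : 0 < t := Real.sqrt_pos.mpr (by linarith)
    have ht2 : t ^ 2 = -u₀.re := Real.sq_sqrt (by linarith)
    have hu : u₀ = ((t : ℂ) * I)^2 := by
      have h1 : u₀ = (u₀.re : ℂ) := by
        apply Complex.ext <;> simp [him]
      have h2 : ((t:ℂ)*I)^2 = ((-(t^2) : ℝ) : ℂ) := by
        push_cast; rw [mul_pow, Complex.I_sq]; ring
      rw [h1, h2]
      norm_cast
      linarith [ht2]
    -- w₀ = ± t*I
    have hcases : w₀ = (t:ℂ)*I ∨ w₀ = -((t:ℂ)*I) := by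
      have : (w₀ - (t:ℂ)*I) * (w₀ + (t:ℂ)*I) = 0 := by
        have := hw2.trans hu; linear_combination this
      rcases mul_eq_zero.mp this with h | h
      · left; linear_combination h
      · right; linear_combination h
    have hcos : Complex.cos w₀ = (Real.cosh t : ℂ) := by
      rcases hcases with h | h <;> rw [h]
      · rw [Complex.cos_mul_I]; push_cast; rfl
      · rw [Complex.cos_neg, Complex.cos_mul_I]; push_cast; rfl
    have hsin : Complex.sin w₀ / w₀ = ((Real.sinh t / t : ℝ) : ℂ) := by
      have hti : (t:ℂ) * I ≠ 0 := by
        simp [Complex.I_ne_zero, Complex.ofReal_ne_zero, ne_of_gt ht]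
      have htne : (t:ℂ) ≠ 0 := Complex.ofReal_ne_zero.mpr (ne_of_gt ht)
      rcases hcases with h | h <;> rw [h]
      · rw [Complex.sin_mul_I]
        push_cast
        field_simp
      · rw [Complex.sin_neg, Complex.sin_mul_I]
        push_cast
        field_simp
    rw [hcos, hsin] at hroot
    have hshp : 0 < Real.sinh t := Real.sinh_pos_iff.mpr ht
    have hsht : Real.sinh t ≠ 0 := ne_of_gt hshp
    have hlam : lam₀ = ((t * Real.cosh t / Real.sinh t : ℝ) : ℂ) := by
      have hne : ((Real.sinh t / t : ℝ) : ℂ) ≠ 0 := by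
        rw [Complex.ofReal_ne_zero]
        positivity
      have hthis : lam₀ * ((Real.sinh t / t : ℝ) : ℂ) = (Real.cosh t : ℂ) := by
        linear_combination -hroot
      have htne : (t:ℂ) ≠ 0 := Complex.ofReal_ne_zero.mpr (ne_of_gt ht)
      have hshc : (Real.sinh t : ℂ) ≠ 0 := by exact_mod_cast hsht
      push_cast at hthis hshc htne ⊢
      field_simp [hshc, htne] at hthis ⊢
      linear_combination hthis
    -- now get real contradiction
    have hsq : ((t * Real.cosh t / Real.sinh t : ℝ))^2 = ω^2 + t^2 := by
      have : lam₀^2 = (ω:ℂ)^2 - u₀ := by rw [hu₀]; ring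
      rw [hlam, hu] at this
      have h2 : (((t * Real.cosh t / Real.sinh t : ℝ):ℂ))^2 = ((ω^2 + t^2 : ℝ) : ℂ) := by
        rw [this]
        push_cast
        rw [mul_pow, Complex.I_sq]
        ring
      exact_mod_cast h2
    have hst : t < Real.sinh t := Real.self_lt_sinh_iff.mpr ht
    have hch : Real.cosh t ^ 2 = Real.sinh t ^ 2 + 1 := Real.cosh_sq t
    have hsq2 : t^2 * Real.cosh t^2 = (ω^2 + t^2) * Real.sinh t^2 := by
      field_simp at hsq
      linarith [hsq]
    have hkey : t^2 = ω^2 * Real.sinh t^2 := by nlinarith [hsq2, hch]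
    have h1 : t < ω * Real.sinh t := by nlinarith
    nlinarith [h1, ht, mul_pos ht hshp]
  -- main computation of the derivative
  have hnear : ∀ᶠ lam in nhds lam₀, (ω:ℂ)^2 - lam^2 ≠ 0 := by
    have hc : ContinuousAt (fun lam : ℂ => (ω:ℂ)^2 - lam^2) lam₀ := by fun_prop
    exact hc.eventually_ne h0
  have heq : (fun lam : ℂ =>
        Complex.cos (((ω : ℂ)^2 - lam^2) ^ ((1 : ℂ)/2)) -
          lam * (if (ω : ℂ)^2 - lam^2 = 0 then 1 else
            Complex.sin (((ω : ℂ)^2 - lam^2) ^ ((1 : ℂ)/2)) /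
              (((ω : ℂ)^2 - lam^2) ^ ((1 : ℂ)/2)))) =ᶠ[nhds lam₀]
      (fun lam : ℂ =>
        Complex.cos (((ω : ℂ)^2 - lam^2) ^ ((1 : ℂ)/2)) -
          lam * (Complex.sin (((ω : ℂ)^2 - lam^2) ^ ((1 : ℂ)/2)) /
              (((ω : ℂ)^2 - lam^2) ^ ((1 : ℂ)/2)))) := by
    filter_upwards [hnear] with lam hl
    rw [if_neg hl]
  rw [heq.deriv_eq] at hcrit
  have hu' : HasDerivAt (fun lam : ℂ => (ω:ℂ)^2 - lam^2) (-(2*lam₀)) lam₀ := by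
    simpa using (hasDerivAt_pow 2 lam₀).const_sub ((ω:ℂ)^2)
  have hwD : HasDerivAt (fun lam : ℂ => ((ω:ℂ)^2 - lam^2) ^ ((1:ℂ)/2))
      ((1:ℂ)/2 * u₀ ^ ((1:ℂ)/2 - 1) * (-(2*lam₀))) lam₀ := hu'.cpow_const hslit
  have hpow : u₀ ^ ((1:ℂ)/2 - 1) = w₀⁻¹ := by
    rw [show ((1:ℂ)/2 - 1) = -((1:ℂ)/2) by norm_num, Complex.cpow_neg, ← hw₀def]
  have hwD' : HasDerivAt (fun lam : ℂ => ((ω:ℂ)^2 - lam^2) ^ ((1:ℂ)/2))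
      (-lam₀ * w₀⁻¹) lam₀ := by
    convert hwD using 1
    rw [hpow]; ring
  have hqD := (hwD'.csin).div hwD' hw0
  have hmulD := (hasDerivAt_id' lam₀).mul hqD
  have hFD := (hwD'.ccos).sub hmulD
  erw [hFD.deriv] at hcrit
  rw [show ((ω:ℂ)^2 - lam₀^2) ^ ((1:ℂ)/2) = w₀ from rfl] at hcrit
  set s := Complex.sin w₀ with hsdef
  set c := Complex.cos w₀ with hcdef
  have hrootc : c * w₀ = lam₀ * s := by
    have h1 := hroot
    field_simp at h1
    linear_combination h1
  have hpyth : s^2 + c^2 = 1 := Complex.sin_sq_add_cos_sq w₀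
  have hw2' : w₀^2 = (ω:ℂ)^2 - lam₀^2 := by rw [hw2, hu₀]
  have hkey : s * (lam₀ - 1) * (ω:ℂ)^2 = 0 :=
    alg s c w₀ lam₀ (ω:ℂ) hw0 hrootc hw2' hcrit
  have hωC : ((ω:ℂ))^2 ≠ 0 := by
    have h1 : (ω:ℂ) ≠ 0 := by exact_mod_cast ne_of_gt hω0
    exact pow_ne_zero 2 h1
  have hs : s ≠ 0 := by
    intro hs0
    have hc0 : c = 0 := by
      have h1 := hrootc
      rw [hs0, mul_zero] at h1
      exact (mul_eq_zero.mp h1).resolve_right hw0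
    rw [hs0, hc0] at hpyth
    norm_num at hpyth
  have hlam1 : lam₀ = 1 := by
    have h1 := (mul_eq_zero.mp hkey).resolve_right hωC
    have h2 := (mul_eq_zero.mp h1).resolve_left hs
    linear_combination h2
  refine ⟨hlam1, ?_⟩
  set r := Real.sqrt (ω^2 - 1) with hrdef
  have hr2 : r^2 = ω^2 - 1 := Real.sq_sqrt (by nlinarith)
  have hrpos : 0 < r := Real.sqrt_pos.mpr (by nlinarith)
  have hrne : ((r:ℝ):ℂ) ≠ 0 := Complex.ofReal_ne_zero.mpr (ne_of_gt hrpos)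
  have hw2r : w₀ ^ 2 = ((r:ℝ):ℂ)^2 := by
    rw [hw2, hu₀, hlam1, show ((r:ℝ):ℂ)^2 = ((r^2 : ℝ):ℂ) by push_cast; ring, hr2]
    push_cast; ring
  have hcasesr : w₀ = ((r:ℝ):ℂ) ∨ w₀ = -((r:ℝ):ℂ) := by
    have h1 : (w₀ - (r:ℝ)) * (w₀ + (r:ℝ)) = 0 := by linear_combination hw2r
    rcases mul_eq_zero.mp h1 with h | h
    · left; linear_combination h
    · right; linear_combination h
  have hroot1 : Complex.cos ((r:ℝ):ℂ) - Complex.sin ((r:ℝ):ℂ) / ((r:ℝ):ℂ) = 0 := by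
    rw [hlam1, one_mul] at hroot
    rcases hcasesr with h | h
    · rw [hcdef, hsdef, h] at hroot; exact hroot
    · rw [hcdef, hsdef, h, Complex.cos_neg, Complex.sin_neg, neg_div_neg_eq] at hroot
      exact hroot
  have hreal : Real.sin r = r * Real.cos r := by
    have h2 : Complex.cos ((r:ℝ):ℂ) * ((r:ℝ):ℂ) = Complex.sin ((r:ℝ):ℂ) := by
      field_simp at hroot1
      linear_combination hroot1
    have h3 : ((Real.cos r * r : ℝ):ℂ) = ((Real.sin r : ℝ):ℂ) := by
      push_cast
      exact h2
    have h4 := Complex.ofReal_inj.mp h3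
    linarith
  rw [div_eq_iff (by positivity : ω^2 ≠ (0:ℝ))]
  linear_combination (1 - ω^2) * (Real.sin_sq_add_cos_sq r) -
    (Real.sin r + r * Real.cos r) * hreal - (Real.cos r)^2 * hr2
end

section
/- Let ω > 1. There exists an absolute constant c₀ > 0 (independent of ω) such that the set S = {λ = a + ib ∈ ℂ : |a| ≥ c₀ω, |b| ≤ |a|} contains no roots of the equation sin(κ)/κ = ±1/ω with κ² = ω² − λ², i.e. no roots of sin²κ = κ²/ω². -/
open Complex Real

lemma abs_sin_sq' (z : ℂ) :
    ‖Complex.sin z‖ ^ 2 = Real.sin z.re ^ 2 + Real.sinh z.im ^ 2 := by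
  rw [Complex.sq_norm, Complex.sin_eq]
  simp [Complex.normSq_apply, Complex.sin_ofReal_re, Complex.cos_ofReal_re,
    Complex.sinh_ofReal_re, Complex.cosh_ofReal_re]
  nlinarith [Real.sin_sq_add_cos_sq z.re, Real.cosh_sq z.im]

lemma exp_cube' (t : ℝ) (ht : 0 ≤ t) : t^3 / 27 ≤ Real.exp t := by
  have h1 : 1 + t/3 ≤ Real.exp (t/3) := by linarith [Real.add_one_le_exp (t/3)]
  have h2 : Real.exp t = Real.exp (t/3) ^ 3 := by
    rw [← Real.exp_nat_mul]; norm_num; ring_nf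
  have h3 : (t/3)^3 ≤ Real.exp (t/3) ^ 3 :=
    pow_le_pow_left₀ (by positivity) (by linarith) 3
  have h4 : (t/3)^3 = t^3/27 := by ring
  linarith [h2 ▸ h3, h4 ▸ h3]

lemma real_contr (ω a b t : ℝ) (hω : 1 < ω) (hA : 1000 * ω ≤ |a|) (hb : |b| ≤ |a|)
    (h1 : a^2 - ω^2 ≤ t^2) (ht0 : 0 ≤ t)
    (h2 : Real.sinh t ^ 2 ≤ ω^2 + a^2 + b^2) : False := by
  have hA1 : (1000:ℝ) < |a| := by nlinarith [abs_nonneg a]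
  have hω2 : ω^2 ≤ |a|^2 / 1000 := by nlinarith [abs_nonneg a]
  have ha2 : a^2 = |a|^2 := (_root_.sq_abs a).symm
  have hb2 : b^2 ≤ a^2 := by nlinarith [_root_.sq_abs a, _root_.sq_abs b, abs_nonneg a, abs_nonneg b]
  have ht500 : 500 ≤ t := by nlinarith
  have hexp : t^3/27 ≤ Real.exp t := exp_cube' t ht0
  have hexpneg : Real.exp (-t) ≤ 1 := Real.exp_le_one_iff.mpr (by linarith)
  have hs_lb : (t^3/27 - 1)/2 ≤ Real.sinh t := by
    rw [Real.sinh_eq]; linarith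
  have hta : a^2 ≤ 2 * t^2 := by nlinarith
  have h5 : 3*t ≤ (t^3/27 - 1)/2 := by nlinarith
  have h6 : 3*t ≤ Real.sinh t := by linarith
  nlinarith [sq_nonneg (Real.sinh t - 3*t), h6, ht500, hta, hb2, hω2, ha2]

/-- There is an absolute constant `c₀ > 0` such that for every `ω > 1`, the set
`S = {λ = a + ib : |a| ≥ c₀ ω, |b| ≤ |a|}` contains no roots of
`sin²κ = κ²/ω²` with `κ² = ω² - λ²`. -/
theorem trapped_modes_stmt8 :
    ∃ c₀ : ℝ, 0 < c₀ ∧ ∀ ω : ℝ, 1 < ω → ∀ lam : ℂ,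
      c₀ * ω ≤ |lam.re| → |lam.im| ≤ |lam.re| →
      (Complex.sin (((ω : ℂ)^2 - lam^2) ^ ((1 : ℂ)/2)))^2 ≠
        ((ω : ℂ)^2 - lam^2) / (ω : ℂ)^2 := by
  refine ⟨1000, by norm_num, fun ω hω lam ha hb hEq => ?_⟩
  set a := lam.re with hadef
  set b := lam.im with hbdef
  have hω0 : (0:ℝ) < ω := by linarith
  have hA : 1000 * ω ≤ |a| := ha
  have hA1 : (1000:ℝ) < |a| := by nlinarith [abs_nonneg a]
  set w : ℂ := (ω : ℂ)^2 - lam^2 with hw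
  have habs_lam : ‖lam‖ ^ 2 = a^2 + b^2 := by
    rw [Complex.sq_norm, Complex.normSq_apply]; ring
  have h2 : ‖(ω:ℂ)^2‖ = ω^2 := by
    rw [norm_pow, Complex.norm_real, Real.norm_eq_abs, abs_of_pos hω0]
  have h1 : ‖lam^2‖ = a^2 + b^2 := by rw [norm_pow, habs_lam]
  have hre_w : w.re = ω^2 - (a^2 - b^2) := by
    simp [hw, hadef, hbdef, Complex.sub_re, Complex.mul_re, pow_two]
  have habsw_lb : a^2 + b^2 - ω^2 ≤ ‖w‖ := by
    have h3 : ‖lam^2 - (ω:ℂ)^2‖ = ‖w‖ := by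
      rw [hw, norm_sub_rev]
    have := norm_add_le (lam^2 - (ω:ℂ)^2) ((ω:ℂ)^2)
    simp only [sub_add_cancel] at this
    rw [h1, h3, h2] at this
    linarith
  have habsw_ub : ‖w‖ ≤ ω^2 + a^2 + b^2 := by
    calc ‖w‖ ≤ ‖(ω:ℂ)^2‖ + ‖lam^2‖ := by
          rw [hw]; exact norm_sub_le _ _
      _ = ω^2 + (a^2 + b^2) := by rw [h1, h2]
      _ ≤ _ := by linarith
  have hw0 : w ≠ 0 := by
    intro h
    rw [h] at habsw_lb
    simp at habsw_lb
    nlinarith [_root_.sq_abs a, sq_nonneg b]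
  set κ : ℂ := w ^ ((1:ℂ)/2) with hκ
  have hκsq : κ^2 = w := by
    rw [hκ]
    have : (1:ℂ)/2 = ((2:ℕ):ℂ)⁻¹ := by norm_num
    rw [this, Complex.cpow_nat_inv_pow _ (by norm_num)]
  -- Im κ squared
  have hre_κ2 : (κ^2).re = κ.re^2 - κ.im^2 := by
    simp [pow_two, Complex.mul_re]
  have habsκ : ‖w‖ = κ.re^2 + κ.im^2 := by
    rw [← hκsq, norm_pow, Complex.sq_norm, Complex.normSq_apply]; ring
  have him_sq : a^2 - ω^2 ≤ κ.im^2 := by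
    have hwre : w.re = κ.re^2 - κ.im^2 := by rw [← hκsq, hre_κ2]
    nlinarith [habsw_lb, habsκ, hre_w, hwre]
  -- take absolute values in hEq
  have key : Real.sin κ.re ^ 2 + Real.sinh κ.im ^ 2 = ‖w‖ / ω^2 := by
    have := congrArg norm hEq
    rw [norm_pow, abs_sin_sq', norm_div, h2] at this
    exact this
  have hsinh_ub : Real.sinh κ.im ^ 2 ≤ ω^2 + a^2 + b^2 := by
    have h4 : ‖w‖ / ω^2 ≤ ‖w‖ := by
      apply div_le_self (norm_nonneg w); nlinarith
    nlinarith [sq_nonneg (Real.sin κ.re)]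
  exact real_contr ω a b |κ.im| hω hA hb (by nlinarith [_root_.sq_abs κ.im, him_sq])
    (abs_nonneg _) (by rw [← _root_.sq_abs (Real.sinh κ.im), Real.abs_sinh] at hsinh_ub; exact hsinh_ub)
end

section
/- Let ω > 0, and for j, k and signs τ, θ let w_jτ(x,y) = e^{−iλ_jτ y}(sin(κ_jτ x), (−1)^{j+1} i sin(κ_jτ(x−1))) with κ_jτ real satisfying sin(κ_jτ)/κ_jτ = (−1)^{j+1}/ω and λ_jτ = κ_jτ cot(κ_jτ). Then the symplectic form satisfies q(w_jτ, w_jτ) = (i/ω)(λ_jτ − 1). -/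
open intervalIntegral in
lemma tm_integral (κ : ℝ) (hκ : κ ≠ 0) :
    (∫ x in (0:ℝ)..1, Real.sin (κ*x) * Real.sin (κ*(x-1)))
      = Real.cos κ / 2 - Real.sin κ / (2*κ) := by
  have h := intervalIntegral.integral_eq_sub_of_hasDerivAt
    (f := fun x : ℝ => Real.cos κ * x / 2 - Real.sin (2*κ*x - κ) / (4*κ))
    (f' := fun x : ℝ => Real.sin (κ*x) * Real.sin (κ*(x-1)))
    (a := 0) (b := 1) ?_ ?_
  · rw [h]
    ring_nf
    rw [Real.sin_neg]
    ring
  · intro x _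
    have d1 : HasDerivAt (fun x : ℝ => Real.cos κ * x / 2) (Real.cos κ / 2) x := by
      simpa using ((hasDerivAt_id x).const_mul (Real.cos κ)).div_const 2
    have inner : HasDerivAt (fun x : ℝ => 2*κ*x - κ) (2*κ) x := by
      simpa using ((hasDerivAt_id x).const_mul (2*κ)).sub_const κ
    have d2 : HasDerivAt (fun x : ℝ => Real.sin (2*κ*x - κ) / (4*κ))
        (Real.cos (2*κ*x - κ) * (2*κ) / (4*κ)) x :=
      ((Real.hasDerivAt_sin _).comp x inner).div_const (4*κ)
    have := d1.sub d2
    convert this using 1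
    · rfl
    have hcc : Real.cos κ - Real.cos (2*κ*x - κ)
        = 2 * Real.sin (κ*x) * Real.sin (κ*(x-1)) := by
      rw [Real.cos_sub_cos]
      have : Real.sin ((κ - (2*κ*x - κ))/2) = - Real.sin (κ*(x-1)) := by
        rw [← Real.sin_neg]; ring_nf
      rw [this]
      ring_nf
    rw [mul_div_assoc, show (2*κ)/(4*κ) = 1/2 by rw [div_eq_iff (mul_ne_zero four_ne_zero hκ)]; ring]
    linear_combination (-1/2)*hcc
  · apply Continuous.intervalIntegrable
    fun_prop

/-- For the oscillatory wave
`w_jτ(x,y) = e^{-iλy}(sin(κx), (-1)^{j+1} i sin(κ(x-1)))` with real `κ`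
satisfying `sin κ/κ = (-1)^{j+1}/ω` and `λ = κ cot κ`, one has
`q(w_jτ, w_jτ) = (i/ω)(λ - 1)`. -/
theorem trapped_modes_stmt11 (ω κ lam : ℝ) (j : ℕ) (hω : 0 < ω) (hκ : κ ≠ 0)
    (h1 : Real.sin κ / κ = (-1 : ℝ)^(j+1) / ω)
    (h2 : lam = κ * (Real.cos κ / Real.sin κ)) (y : ℝ) :
    let u : ℝ → ℂ := fun x =>
      Complex.exp (-Complex.I * lam * y) * Complex.sin (κ * x)
    let v : ℝ → ℂ := fun x =>
      Complex.exp (-Complex.I * lam * y) *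
        ((-1 : ℂ)^(j+1) * Complex.I * Complex.sin (κ * ((x : ℂ) - 1)))
    let q : ℂ :=
      -(∫ x in (0:ℝ)..1, (u x * (starRingEnd ℂ) (v x) - v x * (starRingEnd ℂ) (u x)))
    q = Complex.I / (ω : ℂ) * ((lam : ℂ) - 1) := by
  intro u v q
  set ε : ℝ := (-1 : ℝ)^(j+1) with hεdef
  have hω' : ω ≠ 0 := ne_of_gt hω
  have hε : ε = 1 ∨ ε = -1 := by
    rcases Nat.even_or_odd (j+1) with h | h
    · left; rw [hεdef, h.neg_one_pow]
    · right; rw [hεdef, h.neg_one_pow]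
  have hε2 : ε * ε = 1 := by rcases hε with h | h <;> rw [h] <;> norm_num
  have hεne : ε ≠ 0 := by rcases hε with h | h <;> rw [h] <;> norm_num
  have hsin : Real.sin κ ≠ 0 := by
    intro h
    rw [h, zero_div, eq_comm, div_eq_zero_iff] at h1
    rcases h1 with h1 | h1
    · exact hεne h1
    · exact hω' h1
  -- pointwise simplification of the integrand
  have hpt : ∀ x : ℝ, u x * (starRingEnd ℂ) (v x) - v x * (starRingEnd ℂ) (u x)
      = -2 * Complex.I * (ε : ℂ) *
        ((Real.sin (κ*x) * Real.sin (κ*(x-1)) : ℝ) : ℂ) := by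
    intro x
    have hE : Complex.exp (-Complex.I * lam * y) *
        (starRingEnd ℂ) (Complex.exp (-Complex.I * lam * y)) = 1 := by
      rw [← Complex.exp_conj, ← Complex.exp_add]
      simp only [map_mul, map_neg, Complex.conj_I, Complex.conj_ofReal]
      ring_nf
      exact Complex.exp_zero
    have hS1 : Complex.sin ((κ : ℂ) * (x : ℂ)) = ((Real.sin (κ*x) : ℝ) : ℂ) := by
      rw [Complex.ofReal_sin]; push_cast; ring_nf
    have hS2 : Complex.sin ((κ : ℂ) * ((x : ℂ) - 1)) = ((Real.sin (κ*(x-1)) : ℝ) : ℂ) := by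
      rw [Complex.ofReal_sin]; push_cast; ring_nf
    have hεC : ((-1 : ℂ))^(j+1) = ((ε : ℝ) : ℂ) := by push_cast [hεdef]; ring
    simp only [u, v]
    rw [hεC, hS1, hS2]
    simp only [map_mul, Complex.conj_I, Complex.conj_ofReal]
    rw [Complex.ofReal_mul]
    set E := Complex.exp (-Complex.I * lam * y)
    set E' := (starRingEnd ℂ) E
    have : E * E' = 1 := hE
    linear_combination (((Real.sin (κ*x) : ℝ) : ℂ) * ((Real.sin (κ*(x-1)) : ℝ) : ℂ)
      * ((ε : ℝ) : ℂ) * (-2) * Complex.I) * this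
  have hq : q = -((-2 * Complex.I * (ε : ℂ)) *
      ((∫ x in (0:ℝ)..1, Real.sin (κ*x) * Real.sin (κ*(x-1)) : ℝ) : ℂ)) := by
    simp only [q]
    congr 1
    rw [← intervalIntegral.integral_ofReal, ← intervalIntegral.integral_const_mul]
    exact intervalIntegral.integral_congr fun x _ => hpt x
  rw [hq, tm_integral κ hκ]
  -- now purely algebraic
  have key : 2 * ε * (Real.cos κ / 2 - Real.sin κ / (2*κ)) = (lam - 1) / ω := by
    have h1' : Real.sin κ * ω = ε * κ := by
      field_simp at h1; linarith [h1]
    rw [h2]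
    field_simp
    linear_combination (ε*(κ*Real.cos κ - Real.sin κ))*h1' + (κ*(κ*Real.cos κ - Real.sin κ))*hε2
  have hc := congrArg (fun t : ℝ => (t : ℂ)) key
  push_cast at hc
  push_cast
  linear_combination Complex.I * hc
end

section
/- Let λ₊, λ₋ ∈ ℂ with λ₋ = conj(λ₊), Im λ₊ ≠ 0, and let α₁, β₁, α₂, β₂ ∈ ℂ satisfy conj(β₁) = α₁, conj(β₂) = α₂, the normalization relations α₁conj(β₁)(λ₊−1) + β₁conj(α₁)(λ₋−1) = ω, α₂conj(β₂)(λ₊−1) + β₂conj(α₂)(λ₋−1) = −ω (ω > 0), and the orthogonality relation α₁conj(β₂)(λ₊−1) + β₁conj(α₂)(λ₋−1) = 0, with α₂, β₁, β₂ ≠ 0. Then α₁/α₂ = β₂/β₁ and |α₁/α₂| = 1. -/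
/-- Proposition 2 of the paper: the algebraic relations among the coefficients
`α₁, β₁, α₂, β₂` of the biorthogonalized waves imply `α₁/α₂ = β₂/β₁` and
`|α₁/α₂| = 1`. -/
theorem trapped_modes_stmt12 (ω : ℝ) (hω : 0 < ω) (lamp lamm α₁ β₁ α₂ β₂ : ℂ)
    (hconj : lamm = (starRingEnd ℂ) lamp) (him : lamp.im ≠ 0)
    (hb1 : (starRingEnd ℂ) β₁ = α₁) (hb2 : (starRingEnd ℂ) β₂ = α₂)
    (hn1 : α₁ * (starRingEnd ℂ) β₁ * (lamp - 1) + β₁ * (starRingEnd ℂ) α₁ * (lamm - 1) = (ω : ℂ))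
    (hn2 : α₂ * (starRingEnd ℂ) β₂ * (lamp - 1) + β₂ * (starRingEnd ℂ) α₂ * (lamm - 1) = -(ω : ℂ))
    (ho : α₁ * (starRingEnd ℂ) β₂ * (lamp - 1) + β₁ * (starRingEnd ℂ) α₂ * (lamm - 1) = 0)
    (ha2 : α₂ ≠ 0) (hb1' : β₁ ≠ 0) (hb2' : β₂ ≠ 0) :
    α₁ / α₂ = β₂ / β₁ ∧ ‖α₁ / α₂‖ = 1 := by
  have hβ1 : β₁ = (starRingEnd ℂ) α₁ := by rw [← hb1, Complex.conj_conj]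
  have hβ2 : β₂ = (starRingEnd ℂ) α₂ := by rw [← hb2, Complex.conj_conj]
  set z : ℂ := lamp - 1 with hzdef
  set cz : ℂ := (starRingEnd ℂ) z with hczdef
  set ca : ℂ := (starRingEnd ℂ) α₁ with hcadef
  set cb : ℂ := (starRingEnd ℂ) α₂ with hcbdef
  have hz : z ≠ 0 := by
    intro h
    apply him
    have : lamp = 1 := by
      have := sub_eq_zero.mp h
      simpa using this
    simp [this]
  have hcz : cz ≠ 0 := by
    rw [hczdef]; simpa using hz
  have hlam : lamm - 1 = cz := by
    rw [hconj, hczdef, hzdef, map_sub, map_one]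
  have hωC : (ω : ℂ) ≠ 0 := by
    exact_mod_cast (Complex.ofReal_ne_zero.mpr (ne_of_gt hω))
  have E1 : α₁ ^ 2 * z + ca ^ 2 * cz = (ω : ℂ) := by
    rw [hb1, hβ1] at hn1
    rw [hlam] at hn1
    linear_combination hn1
  have E2 : α₂ ^ 2 * z + cb ^ 2 * cz = -(ω : ℂ) := by
    rw [hb2, hβ2] at hn2
    rw [hlam] at hn2
    linear_combination hn2
  have E3 : α₁ * α₂ * z + ca * cb * cz = 0 := by
    rw [hb2, hβ1] at ho
    rw [hlam] at ho
    linear_combination ho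
  have hP : ca ^ 2 * cz = (ω : ℂ) - α₁ ^ 2 * z := by linear_combination E1
  have hQ : cb ^ 2 * cz = -(ω : ℂ) - α₂ ^ 2 * z := by linear_combination E2
  have hR : α₁ * α₂ * z = -(ca * cb * cz) := by linear_combination E3
  have key1 : ((ω : ℂ) - α₁ ^ 2 * z) * (-(ω : ℂ) - α₂ ^ 2 * z)
      = (α₁ ^ 2 * z) * (α₂ ^ 2 * z) := by
    calc ((ω : ℂ) - α₁ ^ 2 * z) * (-(ω : ℂ) - α₂ ^ 2 * z)
        = (ca ^ 2 * cz) * (cb ^ 2 * cz) := by rw [hP, hQ]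
      _ = (ca * cb * cz) ^ 2 := by ring
      _ = (α₁ * α₂ * z) ^ 2 := by rw [hR]; ring
      _ = (α₁ ^ 2 * z) * (α₂ ^ 2 * z) := by ring
  have h0 : (ω : ℂ) * (α₁ ^ 2 * z - α₂ ^ 2 * z - (ω : ℂ)) = 0 := by
    linear_combination key1
  have key2 : α₁ ^ 2 * z - α₂ ^ 2 * z = (ω : ℂ) := by
    rcases mul_eq_zero.mp h0 with h | h
    · exact absurd h hωC
    · linear_combination h
  have key3 : (α₁ * ca) ^ 2 * (z * cz) = (α₂ * cb) ^ 2 * (z * cz) := by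
    calc (α₁ * ca) ^ 2 * (z * cz) = (α₁ ^ 2 * z) * (ca ^ 2 * cz) := by ring
      _ = (α₁ ^ 2 * z) * ((ω : ℂ) - α₁ ^ 2 * z) := by rw [hP]
      _ = (α₂ ^ 2 * z) * (-(ω : ℂ) - α₂ ^ 2 * z) := by
          linear_combination (-(α₁ ^ 2 * z + α₂ ^ 2 * z)) * key2
      _ = (α₂ ^ 2 * z) * (cb ^ 2 * cz) := by rw [hQ]
      _ = (α₂ * cb) ^ 2 * (z * cz) := by ring
  have key4 : (α₁ * ca) ^ 2 = (α₂ * cb) ^ 2 :=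
    mul_right_cancel₀ (mul_ne_zero hz hcz) key3
  have hns : Complex.normSq α₁ = Complex.normSq α₂ := by
    have h1 : α₁ * ca = (Complex.normSq α₁ : ℂ) := by
      rw [hcadef]; exact Complex.mul_conj α₁
    have h2 : α₂ * cb = (Complex.normSq α₂ : ℂ) := by
      rw [hcbdef]; exact Complex.mul_conj α₂
    rw [h1, h2] at key4
    have : (Complex.normSq α₁) ^ 2 = (Complex.normSq α₂) ^ 2 := by
      exact_mod_cast key4
    nlinarith [Complex.normSq_nonneg α₁, Complex.normSq_nonneg α₂]
  have hca : α₁ * ca = α₂ * cb := by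
    rw [hcadef, hcbdef, Complex.mul_conj, Complex.mul_conj, hns]
  have ha1 : α₁ ≠ 0 := by
    rw [← hb1]; simpa using hb1'
  constructor
  · rw [hβ1, hβ2]
    have hca1 : (starRingEnd ℂ) α₁ ≠ 0 := by simpa using ha1
    rw [div_eq_div_iff ha2 hca1]
    linear_combination hca
  · rw [norm_div]
    have habs : ‖α₁‖ = ‖α₂‖ := by
      rw [Complex.norm_def, Complex.norm_def, hns]
    rw [habs, div_self (norm_ne_zero_iff.mpr ha2)]
end

section
/- Let λ = ξ + iσ with ξ ∈ ℝ, |ξ| large, σ fixed, and κ² = ω² − λ² with ω > 1 fixed. Then the Green function L(x,z) of the problem −u'' + (λ² − ω²)u = f on (0,1) with Dirichlet conditions u(0) = u(1) = 0, given by L(x,z) = sin(κ x_<)·sin(κ(1 − x_>))/(κ sin κ) (where x_< = min(x,z), x_> = max(x,z)), satisfies |L(x,z)| ≤ (C/|ξ|)·e^{−|ξ||x−z|} for all x, z ∈ [0,1], for some constant C depending only on ω and σ, provided |ξ| is sufficiently large. -/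
lemma my_real_key (a t d m M : ℝ) (ha : 2 ≤ a) (ht : a - 1 ≤ t) (hm : 0 ≤ m)
    (hM : M ≤ 1) (hd : M - m = d) (hd0 : 0 ≤ d) (hd1 : d ≤ 1) :
    Real.exp (t*m) * Real.exp (t*(1-M)) ≤
      8 * Real.exp 1 / a * Real.exp (-a*d) * (t * (Real.exp t/4)) := by
  have ht1 : 1 ≤ t := by linarith
  have ha0 : (0:ℝ) < a := by linarith
  rw [← Real.exp_add]
  have hrw : t*m + t*(1-M) = t + -(t*d) := by rw [← hd]; ring
  rw [hrw, Real.exp_add]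
  have e1 : Real.exp (-(t*d)) = Real.exp (-(a*d)) * Real.exp ((a - t)*d) := by
    rw [← Real.exp_add]; ring_nf
  have e2 : Real.exp ((a-t)*d) ≤ Real.exp 1 := by
    apply Real.exp_le_exp.2
    nlinarith [mul_nonneg (by linarith : (0:ℝ) ≤ 1 - (a - t)) hd0]
  have e3 : Real.exp 1 ≤ 2*Real.exp 1 * t / a := by
    rw [le_div_iff₀ ha0]
    nlinarith [mul_nonneg (by positivity : (0:ℝ) ≤ Real.exp 1) (by linarith : (0:ℝ) ≤ 2*t - a)]
  have e4 : Real.exp (-(t*d)) ≤ Real.exp (-(a*d)) * (2*Real.exp 1 * t / a) := by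
    rw [e1]
    have := Real.exp_pos (-(a*d))
    calc Real.exp (-(a*d)) * Real.exp ((a-t)*d)
        ≤ Real.exp (-(a*d)) * Real.exp 1 := by gcongr
      _ ≤ Real.exp (-(a*d)) * (2*Real.exp 1 * t / a) := by gcongr
  calc Real.exp t * Real.exp (-(t*d))
      ≤ Real.exp t * (Real.exp (-(a*d)) * (2*Real.exp 1 * t / a)) := by
        gcongr
    _ = 8 * Real.exp 1 / a * Real.exp (-a*d) * (t * (Real.exp t/4)) := by
        rw [show -a*d = -(a*d) by ring]; field_simp; ring

lemma my_abs_exp_mul_I (z : ℂ) : ‖Complex.exp (z * Complex.I)‖ = Real.exp (-z.im) := by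
  rw [Complex.norm_exp]; congr 1; simp [Complex.mul_re]

lemma my_abs_sin_le (z : ℂ) : ‖Complex.sin z‖ ≤ Real.exp |z.im| := by
  rw [Complex.sin, norm_div, norm_mul, Complex.norm_I, mul_one, Complex.norm_two]
  have h1 : ‖Complex.exp (-z * Complex.I)‖ = Real.exp z.im := by
    simpa using my_abs_exp_mul_I (-z)
  have h2 := my_abs_exp_mul_I z
  have := norm_sub_le (Complex.exp (-z * Complex.I)) (Complex.exp (z * Complex.I))
  rw [h1, h2] at this
  have e1 : Real.exp z.im ≤ Real.exp |z.im| := Real.exp_le_exp.2 (le_abs_self _)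
  have e2 : Real.exp (-z.im) ≤ Real.exp |z.im| := Real.exp_le_exp.2 (neg_le_abs _)
  linarith

lemma my_abs_sin_ge (z : ℂ) (h : 1 ≤ |z.im|) :
    Real.exp |z.im| / 4 ≤ ‖Complex.sin z‖ := by
  rw [Complex.sin, norm_div, norm_mul, Complex.norm_I, mul_one, Complex.norm_two]
  have h1 : ‖Complex.exp (-z * Complex.I)‖ = Real.exp z.im := by
    simpa using my_abs_exp_mul_I (-z)
  have h2 := my_abs_exp_mul_I z
  have hl : |Real.exp z.im - Real.exp (-z.im)| ≤
      ‖Complex.exp (-z * Complex.I) - Complex.exp (z * Complex.I)‖ := by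
    rw [← h1, ← h2]
    simpa using abs_norm_sub_norm_le (Complex.exp (-z * Complex.I)) (Complex.exp (z * Complex.I))
  have habs : |Real.exp z.im - Real.exp (-z.im)| = Real.exp |z.im| - Real.exp (-|z.im|) := by
    rcases le_total 0 z.im with hz | hz
    · rw [abs_of_nonneg hz]
      rw [abs_of_nonneg (by have := Real.exp_le_exp.2 (neg_le_self hz); linarith)]
    · rw [abs_of_nonpos hz, neg_neg]
      rw [abs_of_nonpos (by have := Real.exp_le_exp.2 (le_neg_self_iff.mpr hz); linarith)]
      ring
  have key : Real.exp |z.im| / 2 ≤ |Real.exp z.im - Real.exp (-z.im)| := by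
    have h2le : (2:ℝ) ≤ Real.exp |z.im| := by
      have := Real.add_one_le_exp (1:ℝ)
      have := Real.exp_le_exp.2 h
      linarith
    have hel : Real.exp (-|z.im|) ≤ 1 := by
      rw [← Real.exp_zero]
      exact Real.exp_le_exp.2 (by linarith [abs_nonneg z.im])
    rw [habs]; linarith
  linarith

/-- Kernel estimate for the Green function of `-u'' + (λ² - ω²)u = f` on `(0,1)`
with Dirichlet conditions, `λ = ξ + iσ`, `κ² = ω² - λ²`: for `|ξ|` large,
`|L(x,z)| ≤ (C/|ξ|) e^{-|ξ||x-z|}` with `C = C(ω,σ)`. -/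
theorem trapped_modes_stmt19 (ω σ : ℝ) (hω : 1 < ω) :
    ∃ C : ℝ, 0 < C ∧ ∃ Ξ : ℝ, ∀ ξ : ℝ, Ξ ≤ |ξ| →
      let lam : ℂ := (ξ : ℂ) + (σ : ℂ) * Complex.I
      let κ : ℂ := ((ω : ℂ)^2 - lam^2) ^ ((1 : ℂ)/2)
      κ * Complex.sin κ ≠ 0 ∧
      ∀ x ∈ Set.Icc (0:ℝ) 1, ∀ z ∈ Set.Icc (0:ℝ) 1,
        ‖(Complex.sin (κ * (min x z : ℝ)) *
            Complex.sin (κ * (1 - (max x z : ℝ))) / (κ * Complex.sin κ))‖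
          ≤ C / |ξ| * Real.exp (-|ξ| * |x - z|) := by
  refine ⟨8 * Real.exp 1, by positivity, σ^2 + ω^2 + 2, ?_⟩
  intro ξ hξ
  intro lam κ
  have hω2 : 1 < ω^2 := by nlinarith
  have ha2 : 2 ≤ |ξ| := by nlinarith [sq_nonneg σ]
  have ha0 : (0:ℝ) < |ξ| := by linarith
  have hκ2 : κ ^ 2 = (ω:ℂ)^2 - lam^2 := by
    show (((ω : ℂ)^2 - lam^2) ^ ((1:ℂ)/2)) ^ 2 = _
    rw [show ((1:ℂ)/2) = (((2:ℕ)):ℂ)⁻¹ by norm_num]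
    exact Complex.cpow_nat_inv_pow _ two_ne_zero
  have hlre : lam.re = ξ := by simp [lam]
  have hlim : lam.im = σ := by simp [lam]
  have h1 : (lam^2).re = ξ^2 - σ^2 := by rw [pow_two, Complex.mul_re, hlre, hlim]; ring
  have hwre : ((ω:ℂ)^2 - lam^2).re = ω^2 - ξ^2 + σ^2 := by
    rw [Complex.sub_re, h1, ← Complex.ofReal_pow, Complex.ofReal_re]; ring
  have e1 : ‖κ‖ ^ 2 = ‖(ω:ℂ)^2 - lam^2‖ := by
    rw [← hκ2]; exact (norm_pow κ 2).symm
  have e2 : κ.re^2 - κ.im^2 = ((ω:ℂ)^2 - lam^2).re := by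
    rw [← hκ2, pow_two κ, Complex.mul_re]; ring
  have e3 : ‖κ‖ ^ 2 = κ.re^2 + κ.im^2 := by
    rw [Complex.sq_norm, Complex.normSq_apply]; ring
  have e4 : -(((ω:ℂ)^2 - lam^2).re) ≤ ‖(ω:ℂ)^2 - lam^2‖ := by
    have h5 := Complex.abs_re_le_norm ((ω:ℂ)^2 - lam^2)
    have h6 := neg_abs_le (((ω:ℂ)^2 - lam^2).re)
    linarith
  have htim2 : ξ^2 - σ^2 - ω^2 ≤ κ.im^2 := by
    rw [hwre] at e2 e4; linarith
  have ht_lb : |ξ| - 1 ≤ |κ.im| := by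
    have hsq : (|ξ| - 1)^2 ≤ |κ.im|^2 := by
      rw [sq_abs]; nlinarith [sq_abs ξ, sq_nonneg σ, sq_nonneg ω]
    nlinarith [abs_nonneg κ.im, abs_nonneg ξ]
  have ht1 : 1 ≤ |κ.im| := by linarith
  have ht0 : (0:ℝ) < |κ.im| := by linarith
  have hκne : κ ≠ 0 := by
    intro h
    rw [h] at ht0
    simp at ht0
  have hsin_lb := my_abs_sin_ge κ ht1
  have hsinne : Complex.sin κ ≠ 0 := by
    intro h
    rw [h] at hsin_lb
    simp at hsin_lb
    nlinarith [Real.exp_pos |κ.im|]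
  refine ⟨mul_ne_zero hκne hsinne, ?_⟩
  intro x hx z hz
  obtain ⟨hx0, hx1⟩ := hx
  obtain ⟨hz0, hz1⟩ := hz
  have hm0 : 0 ≤ min x z := le_min hx0 hz0
  have hM1 : max x z ≤ 1 := max_le hx1 hz1
  have hmM : min x z ≤ max x z := min_le_max
  have hd : max x z - min x z = |x - z| := by rw [abs_sub_comm]; exact max_sub_min_eq_abs x z
  have hd0 : 0 ≤ |x - z| := abs_nonneg _
  have hd1 : |x - z| ≤ 1 := by rw [← hd]; linarith
  -- numerator bounds
  have hA : ‖Complex.sin (κ * (min x z : ℝ))‖ ≤ Real.exp (|κ.im| * min x z) := by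
    have h := my_abs_sin_le (κ * (min x z : ℝ))
    have him : (κ * ((min x z : ℝ):ℂ)).im = κ.im * min x z := by
      simp [Complex.mul_im]
    rw [him, abs_mul, abs_of_nonneg hm0] at h
    exact h
  have hB : ‖Complex.sin (κ * (1 - (max x z : ℝ)))‖ ≤
      Real.exp (|κ.im| * (1 - max x z)) := by
    have h := my_abs_sin_le (κ * (1 - ((max x z : ℝ):ℂ)))
    have him : (κ * (1 - ((max x z : ℝ):ℂ))).im = κ.im * (1 - max x z) := by
      simp [Complex.mul_im]
    rw [him, abs_mul, abs_of_nonneg (by linarith : (0:ℝ) ≤ 1 - max x z)] at h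
    exact h
  have hD : |κ.im| * (Real.exp |κ.im| / 4) ≤ ‖κ * Complex.sin κ‖ := by
    rw [norm_mul]
    exact mul_le_mul (Complex.abs_im_le_norm κ) hsin_lb (by positivity)
      (norm_nonneg κ)
  have hDpos : (0:ℝ) < ‖κ * Complex.sin κ‖ :=
    norm_pos_iff.mpr (mul_ne_zero hκne hsinne)
  rw [norm_div, norm_mul, div_le_iff₀ hDpos]
  calc ‖Complex.sin (κ * (min x z : ℝ))‖ *
        ‖Complex.sin (κ * (1 - (max x z : ℝ)))‖
      ≤ Real.exp (|κ.im| * min x z) * Real.exp (|κ.im| * (1 - max x z)) := by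
        exact mul_le_mul hA hB (norm_nonneg _) (Real.exp_nonneg _)
    _ ≤ 8 * Real.exp 1 / |ξ| * Real.exp (-|ξ| * |x - z|) *
          (|κ.im| * (Real.exp |κ.im| / 4)) :=
        my_real_key |ξ| |κ.im| |x - z| (min x z) (max x z) ha2 ht_lb hm0 hM1 hd hd0 hd1
    _ ≤ 8 * Real.exp 1 / |ξ| * Real.exp (-|ξ| * |x - z|) *
          ‖κ * Complex.sin κ‖ := by
        gcongr
end
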